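/- Let d ≥ 2 be a square-free positive integer, ε = a + b√d a totally positive unit in Q(√d) with ε > 1 and b > 0, and let N = Z ⊕ ωZ be a lattice in Q(√d) with ε·N = N. Then for all sufficiently large integers p, the element α = p + b√d satisfies: α is totally positive, and α/α' = (p² + db² + 2bp√d)/(p² − db²) is not an algebraic integer of Q(√d). Consequently, no power of α/α' equals an integer multiple of a power of ε², so log(α/α')/(2 log ε) is irrational. -/

import Mathlib

open Polynomial

lemma sqrt_irr (d : ℕ) (hd2 : 2 ≤ d) (hdsf : Squarefree d) : Irrational (Real.sqrt d) := by
  rw [irrational_sqrt_natCast_iff]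
  rintro ⟨k, hk⟩
  have : IsUnit k := hdsf k (by rw [hk])
  have h1 : k = 1 := Nat.isUnit_iff.mp this
  rw [h1] at hk; omega

lemma trace_int (d : ℕ) (hd2 : 2 ≤ d) (hdsf : Squarefree d) (q r : ℚ) (hr : r ≠ 0)
    (hx : IsIntegral ℤ ((q : ℝ) + (r : ℝ) * Real.sqrt d)) : ∃ t : ℤ, (t : ℚ) = 2 * q := by
  set s := Real.sqrt d with hsdef
  have hs2 : s ^ 2 = (d : ℝ) := Real.sq_sqrt (by positivity)
  set x : ℝ := (q : ℝ) + (r : ℝ) * s with hxdef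
  have hirr : Irrational x := ((sqrt_irr d hd2 hdsf).ratCast_mul hr).ratCast_add q
  have hnr : x ∉ (algebraMap ℚ ℝ).range := by
    rintro ⟨c, hc⟩
    exact hirr ⟨c, hc⟩
  have hxQ : IsIntegral ℚ x := hx.tower_top
  set f : ℚ[X] := X ^ 2 - C (2 * q) * X + C (q ^ 2 - d * r ^ 2) with hfdef
  have hfm : f.Monic := by
    unfold f
    monicity!
  have hfd : f.natDegree = 2 := by
    unfold f
    compute_degree!
  have hroot : aeval x f = 0 := by
    simp only [hfdef, map_add, map_sub, map_mul, map_pow, aeval_X, aeval_C, eq_ratCast]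
    push_cast
    linear_combination (r : ℝ) ^ 2 * hs2
  have hdvd : minpoly ℚ x ∣ f := minpoly.dvd ℚ x hroot
  have h2le : 2 ≤ (minpoly ℚ x).natDegree := (minpoly.two_le_natDegree_iff hxQ).mpr hnr
  have heq : minpoly ℚ x = f := by
    refine Polynomial.eq_of_dvd_of_natDegree_le_of_leadingCoeff hdvd (by rw [hfd]; exact h2le) ?_
    rw [(minpoly.monic hxQ).leadingCoeff, hfm.leadingCoeff]
  have hmap : minpoly ℚ x = (minpoly ℤ x).map (algebraMap ℤ ℚ) :=
    minpoly.isIntegrallyClosed_eq_field_fractions' ℚ hx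
  refine ⟨-((minpoly ℤ x).coeff 1), ?_⟩
  have hc1 : (minpoly ℚ x).coeff 1 = ((minpoly ℤ x).coeff 1 : ℚ) := by
    rw [hmap, Polynomial.coeff_map]; rfl
  have hc2 : f.coeff 1 = -(2 * q) := by
    simp only [hfdef, coeff_add, coeff_sub, coeff_C_mul, coeff_X, coeff_X_pow, coeff_C]
    norm_num
  rw [heq, hc2] at hc1
  push_cast
  linarith [hc1]
theorem stmt11 (d : ℕ) (hd2 : 2 ≤ d) (hdsf : Squarefree d) (a b : ℚ) (hb : 0 < b)
    (hε1 : 1 < (a : ℝ) + (b : ℝ) * Real.sqrt d)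
    (hunit : ((a : ℝ) + (b : ℝ) * Real.sqrt d) * ((a : ℝ) - (b : ℝ) * Real.sqrt d) = 1)
    (hint : IsIntegral ℤ ((a : ℝ) + (b : ℝ) * Real.sqrt d)) :
    ∃ P : ℕ, ∀ p : ℕ, P ≤ p →
      0 < (p : ℝ) + (b : ℝ) * Real.sqrt d ∧
      0 < (p : ℝ) - (b : ℝ) * Real.sqrt d ∧
      ¬ IsIntegral ℤ
        (((p : ℝ) + (b : ℝ) * Real.sqrt d) / ((p : ℝ) - (b : ℝ) * Real.sqrt d)) ∧
      (∀ m : ℕ, 1 ≤ m → ∀ k : ℤ, ∀ n : ℕ,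
        (((p : ℝ) + (b : ℝ) * Real.sqrt d) / ((p : ℝ) - (b : ℝ) * Real.sqrt d)) ^ m ≠
          (k : ℝ) * (((a : ℝ) + (b : ℝ) * Real.sqrt d) ^ 2) ^ n) ∧
      Irrational
        (Real.log (((p : ℝ) + (b : ℝ) * Real.sqrt d) /
            ((p : ℝ) - (b : ℝ) * Real.sqrt d)) /
          (2 * Real.log ((a : ℝ) + (b : ℝ) * Real.sqrt d))) := by
  set s := Real.sqrt d with hsdef
  have hs2 : s ^ 2 = (d : ℝ) := Real.sq_sqrt (by positivity)
  have hs0 : 0 < s := Real.sqrt_pos.mpr (by positivity)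
  refine ⟨⌈(5 * d * b ^ 2 : ℚ)⌉₊ + 1, fun p hp => ?_⟩
  have hp1 : 1 ≤ p := le_trans (Nat.le_add_left 1 _) hp
  have hpq : (5 * d * b ^ 2 : ℚ) < p := by
    calc (5 * d * b ^ 2 : ℚ) ≤ (⌈(5 * d * b ^ 2 : ℚ)⌉₊ : ℚ) := Nat.le_ceil _
    _ < p := by exact_mod_cast Nat.lt_of_lt_of_le (Nat.lt_succ_self _) hp
  have hp2 : (d * b ^ 2 : ℚ) < (p : ℚ) ^ 2 := by
    have h1 : (1 : ℚ) ≤ p := by exact_mod_cast hp1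
    nlinarith [sq_nonneg (b : ℚ), Nat.cast_nonneg (α := ℚ) d]
  have hp5 : (5 * d * b ^ 2 : ℚ) < (p : ℚ) ^ 2 := by
    have h1 : (1 : ℚ) ≤ p := by exact_mod_cast hp1
    nlinarith
  have hden : (0 : ℚ) < (p : ℚ) ^ 2 - d * b ^ 2 := by linarith
  -- positivity of α and α'
  have hbs : 0 < (b : ℝ) * s := by positivity
  have hαpos : 0 < (p : ℝ) + (b : ℝ) * s := by
    have : (0 : ℝ) < p := by exact_mod_cast hp1
    linarith
  have hsq : ((b : ℝ) * s) ^ 2 < (p : ℝ) ^ 2 := by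
    rw [mul_pow, hs2]
    have h' : ((d : ℝ) * (b : ℝ) ^ 2) < (p : ℝ) ^ 2 := by exact_mod_cast hp2
    linarith
  have hα'pos : 0 < (p : ℝ) - (b : ℝ) * s := by
    nlinarith [hbs, hαpos]
  set A : ℝ := ((p : ℝ) + (b : ℝ) * s) / ((p : ℝ) - (b : ℝ) * s) with hAdef
  set E : ℝ := (a : ℝ) + (b : ℝ) * s with hEdef
  set Q : ℚ := ((p : ℚ) ^ 2 + d * b ^ 2) / ((p : ℚ) ^ 2 - d * b ^ 2) with hQdef
  set R : ℚ := 2 * b * p / ((p : ℚ) ^ 2 - d * b ^ 2) with hRdef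
  have hR0 : R ≠ 0 := by
    rw [hRdef]
    have hp0 : (0 : ℚ) < p := by exact_mod_cast hp1
    positivity
  have hA : A = (Q : ℝ) + (R : ℝ) * s := by
    have hdenR : ((p : ℝ) ^ 2 - (d : ℝ) * (b : ℝ) ^ 2) ≠ 0 := by
      have h := hden.ne'
      intro hcon
      apply h
      exact_mod_cast hcon
    rw [hAdef, hQdef, hRdef, div_eq_iff (ne_of_gt hα'pos)]
    push_cast
    field_simp
    rw [eq_div_iff (by rw [mul_comm ((b : ℝ) ^ 2)]; exact hdenR)]
    linear_combination (2 * (b : ℝ) ^ 2 * (p : ℝ)) * hs2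
  -- not integral
  have h3 : ¬ IsIntegral ℤ A := by
    intro hInt
    rw [hA] at hInt
    obtain ⟨t, ht⟩ := trace_int d hd2 hdsf Q R hR0 hInt
    have hd0 : (0 : ℚ) < d := by exact_mod_cast Nat.lt_of_lt_of_le Nat.zero_lt_two hd2
    have hdb : (0 : ℚ) < d * b ^ 2 := by positivity
    have h2Q : (2 : ℚ) < 2 * Q := by
      rw [hQdef, ← mul_div_assoc, lt_div_iff₀ hden]
      nlinarith
    have h3Q : 2 * Q < 3 := by
      rw [hQdef, ← mul_div_assoc, div_lt_iff₀ hden]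
      nlinarith
    rw [← ht] at h2Q h3Q
    have : (2 : ℤ) < t := by exact_mod_cast h2Q
    have : (t : ℤ) < 3 := by
      have := h3Q; exact_mod_cast this
    omega
  -- powers
  have h4 : ∀ m : ℕ, 1 ≤ m → ∀ k : ℤ, ∀ n : ℕ,
      A ^ m ≠ (k : ℝ) * (E ^ 2) ^ n := by
    intro m hm k n heq
    apply h3
    refine IsIntegral.of_pow hm ?_
    rw [heq]
    exact IsIntegral.mul (isIntegral_algebraMap (x := k)) ((hint.pow 2).pow n)
  -- positivity facts for logs
  have hA1 : 1 < A := by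
    rw [hAdef, lt_div_iff₀ hα'pos]
    linarith
  have hlogA : 0 < Real.log A := Real.log_pos hA1
  have hlogE : 0 < Real.log E := Real.log_pos hε1
  have h5 : Irrational (Real.log A / (2 * Real.log E)) := by
    rintro ⟨q, hq⟩
    have hLpos : 0 < Real.log A / (2 * Real.log E) := by positivity
    have hq0 : 0 < q := by
      have : (0 : ℝ) < (q : ℝ) := hq ▸ hLpos
      exact_mod_cast this
    have hq' : (q : ℝ) * (2 * Real.log E) = Real.log A := by
      rw [eq_div_iff (by positivity)] at hq
      exact hq
    have hnum : (0 : ℤ) < q.num := Rat.num_pos.mpr hq0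
    have hdq : (q.den : ℝ) * (q : ℝ) = (q.num : ℝ) := by
      rw [Rat.cast_def]
      field_simp
    have hlogeq : Real.log (A ^ q.den) = Real.log (E ^ (2 * q.num.toNat)) := by
      have hnt : ((q.num.toNat : ℕ) : ℝ) = (q.num : ℝ) := by
        exact_mod_cast Int.toNat_of_nonneg hnum.le
      rw [Real.log_pow, Real.log_pow]
      push_cast [hnt]
      calc (q.den : ℝ) * Real.log A = (q.den : ℝ) * ((q : ℝ) * (2 * Real.log E)) := by
            rw [hq']
        _ = ((q.den : ℝ) * (q : ℝ)) * (2 * Real.log E) := by ring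
        _ = (q.num : ℝ) * (2 * Real.log E) := by rw [hdq]
        _ = 2 * (q.num : ℝ) * Real.log E := by ring
    have hpoweq : A ^ q.den = E ^ (2 * q.num.toNat) :=
      Real.log_injOn_pos (Set.mem_Ioi.mpr (by positivity))
        (Set.mem_Ioi.mpr (by positivity)) hlogeq
    refine h4 q.den q.pos 1 q.num.toNat ?_
    rw [hpoweq, pow_mul]
    norm_num
  exact ⟨hαpos, hα'pos, h3, h4, h5⟩
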